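/- Let ψ_n = φ in the chosen enumeration of the subformulas of φ, let k_φ be the least k with σ_φ^{k+1}(W⁰,R⁰) = σ_φ^{k}(W⁰,R⁰), and let (W^{k_φ},R^{k_φ}) := σ_φ^{k_φ}(W⁰,R⁰). Then φ ∈ KDe if and only if for every tip (a_1,…,a_n) ∈ W^{k_φ}, a_n = 1. -/

import Mathlib

/-- Formulas of unimodal modal logic. -/
inductive Formula : Type
  | atom : ℕ → Formula
  | falsum : Formula
  | neg : Formula → Formula
  | and : Formula → Formula → Formula
  | box : Formula → Formula
deriving DecidableEq

/-- Material implication, as the usual classical abbreviation. -/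
def Formula.imp (φ ψ : Formula) : Formula := .neg (.and φ (.neg ψ))

/-- Disjunction, as the usual classical abbreviation. -/
def Formula.or (φ ψ : Formula) : Formula := .neg (.and (.neg φ) (.neg ψ))

/-- Uniform substitution of formulas for atoms. -/
def fsubst (σ : ℕ → Formula) : Formula → Formula
  | .atom q => σ q
  | .falsum => .falsum
  | .neg φ => .neg (fsubst σ φ)
  | .and φ ψ => .and (fsubst σ φ) (fsubst σ ψ)
  | .box φ => .box (fsubst σ φ)

/-- A Boolean valuation of the modal language: a Boolean assignment respecting
`⊥`, `¬` and `∧` (boxed formulas are treated as atoms). -/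
def IsBoolVal (v : Formula → Bool) : Prop :=
  v .falsum = false ∧ (∀ φ, v (.neg φ) = !(v φ)) ∧
  (∀ φ ψ, v (.and φ ψ) = (v φ && v ψ))

/-- Classical propositional tautologies of the modal language. -/
def Tautology (φ : Formula) : Prop := ∀ v, IsBoolVal v → v φ = true

/-- A modal logic: a set of formulas closed under uniform substitution and modus
ponens, containing all classical propositional tautologies, containing the axioms
`□p∧□q→□(p∧q)` and `□⊤`, and closed under the rule: from `φ→ψ` infer `□φ→□ψ`. -/
structure IsModalLogic (L : Set Formula) : Prop where
  taut : ∀ φ, Tautology φ → φ ∈ L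
  mp : ∀ φ ψ, Formula.imp φ ψ ∈ L → φ ∈ L → ψ ∈ L
  subst : ∀ φ σ, φ ∈ L → fsubst σ φ ∈ L
  axK : Formula.imp (.and (.box (.atom 0)) (.box (.atom 1)))
          (.box (.and (.atom 0) (.atom 1))) ∈ L
  axTop : Formula.box (.neg .falsum) ∈ L
  mono : ∀ φ ψ, Formula.imp φ ψ ∈ L → Formula.imp (.box φ) (.box ψ) ∈ L

/-- An `L`-theory: a set of formulas containing `L` and closed under modus ponens. -/
def IsTheory (L Γ : Set Formula) : Prop :=
  L ⊆ Γ ∧ ∀ φ ψ, Formula.imp φ ψ ∈ Γ → φ ∈ Γ → ψ ∈ Γ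

/-- A prime `L`-theory: a proper `L`-theory `Γ` (i.e. `⊥ ∉ Γ`) such that
`φ∨ψ ∈ Γ` implies `φ ∈ Γ` or `ψ ∈ Γ`. -/
def IsPrime (L Γ : Set Formula) : Prop :=
  IsTheory L Γ ∧ Formula.falsum ∉ Γ ∧
  ∀ φ ψ, Formula.or φ ψ ∈ Γ → φ ∈ Γ ∨ ψ ∈ Γ

/-- `□Γ := {φ : □φ ∈ Γ}`. -/
def boxInv (Γ : Set Formula) : Set Formula := {φ | Formula.box φ ∈ Γ}

/-- `KDe`: the least modal logic containing `□□p → □p`. -/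
def KDe : Set Formula :=
  ⋂₀ {L : Set Formula |
        IsModalLogic L ∧ Formula.imp (.box (.box (.atom 0))) (.box (.atom 0)) ∈ L}

/-- The set of subformulas of a formula. -/
def Subf : Formula → Set Formula
  | .atom p => {.atom p}
  | .falsum => {.falsum}
  | .neg φ => insert (.neg φ) (Subf φ)
  | .and φ ψ => insert (.and φ ψ) (Subf φ ∪ Subf ψ)
  | .box φ => insert (.box φ) (Subf φ)

/-- `ψs` is an admissible enumeration of the subformulas of `φ`: it enumerates
`Σ_φ` without repetition, and components of a subformula come earlier. -/
def IsEnum (φ : Formula) {n : ℕ} (ψs : Fin n → Formula) : Prop :=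
  Function.Injective ψs ∧ Set.range ψs = Subf φ ∧
  (∀ i j : Fin n, ψs i = .neg (ψs j) → j < i) ∧
  (∀ i j k : Fin n, ψs i = .and (ψs j) (ψs k) → j < i ∧ k < i) ∧
  (∀ i j : Fin n, ψs i = .box (ψs j) → j < i)

/-- A `φ`-tip: a tuple of bits respecting the Boolean structure of the enumerated
subformulas. -/
def IsTip {n : ℕ} (ψs : Fin n → Formula) (a : Fin n → Bool) : Prop :=
  (∀ i : Fin n, ψs i = .falsum → a i = false) ∧
  (∀ i j : Fin n, ψs i = .neg (ψs j) → a i = !(a j)) ∧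
  (∀ i j k : Fin n, ψs i = .and (ψs j) (ψs k) → a i = (a j && a k))

/-- `W⁰`: the set of all `φ`-tips. -/
def tips {n : ℕ} (ψs : Fin n → Formula) : Set (Fin n → Bool) := {a | IsTip ψs a}

/-- `R⁰`: the relation on `W⁰` with `a R⁰ b` iff whenever `ψ_i = □ψ_j` and `a_i = 1`
then `b_j = 1`. -/
def R0 {n : ℕ} (ψs : Fin n → Formula) (a b : Fin n → Bool) : Prop :=
  a ∈ tips ψs ∧ b ∈ tips ψs ∧
  ∀ i j : Fin n, ψs i = .box (ψs j) → a i = true → b j = true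

open Classical in
/-- `τ_φ(s)`: the tuple of bits recording which enumerated subformulas belong to the
theory `s`. -/
noncomputable def tipOf {n : ℕ} (ψs : Fin n → Formula) (s : Set Formula) :
    Fin n → Bool :=
  fun i => if ψs i ∈ s then true else false

/-- A `φ`-clip: `(W,R)` with `W ⊆ W⁰`, `R` a relation on `W` included in `R⁰`,
containing the tips of all prime `KDe`-theories and the `R`-edges coming from
the canonical relation between prime `KDe`-theories. -/
structure IsClip {n : ℕ} (ψs : Fin n → Formula)
    (W : Set (Fin n → Bool)) (R : (Fin n → Bool) → (Fin n → Bool) → Prop) : Prop where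
  wsub : W ⊆ tips ψs
  rmem : ∀ a b, R a b → a ∈ W ∧ b ∈ W
  rsub : ∀ a b, R a b → R0 ψs a b
  tmem : ∀ s : Set Formula, IsPrime KDe s → tipOf ψs s ∈ W
  tedge : ∀ s t : Set Formula, IsPrime KDe s → IsPrime KDe t → boxInv s ⊆ t →
    R (tipOf ψs s) (tipOf ψs t)

/-- The set of worlds of `σ_φ(W,R)`. -/
def sigmaW {n : ℕ} (ψs : Fin n → Formula) (W : Set (Fin n → Bool))
    (R : (Fin n → Bool) → (Fin n → Bool) → Prop) : Set (Fin n → Bool) :=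
  {a | a ∈ W ∧ ∀ i j : Fin n, ψs i = .box (ψs j) → a i = false →
         ∃ b ∈ W, R a b ∧ b j = false}

/-- The relation of `σ_φ(W,R)`: `a R' b` iff `a, b` survive in `σ_φ(W,R)`, `a R b`,
and there is `c ∈ W` with `a R c` and `c R b`. -/
def sigmaR {n : ℕ} (ψs : Fin n → Formula) (W : Set (Fin n → Bool))
    (R : (Fin n → Bool) → (Fin n → Bool) → Prop) :
    (Fin n → Bool) → (Fin n → Bool) → Prop :=
  fun a b => a ∈ sigmaW ψs W R ∧ b ∈ sigmaW ψs W R ∧ R a b ∧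
    ∃ c ∈ W, R a c ∧ R c b

/-- `σ_φ` as an operation on pairs `(W,R)`. -/
def sigmaPair {n : ℕ} (ψs : Fin n → Formula) :
    Set (Fin n → Bool) × ((Fin n → Bool) → (Fin n → Bool) → Prop) →
    Set (Fin n → Bool) × ((Fin n → Bool) → (Fin n → Bool) → Prop) :=
  fun X => (sigmaW ψs X.1 X.2, sigmaR ψs X.1 X.2)

/-- The initial pair `(W⁰, R⁰)`. -/
def X0 {n : ℕ} (ψs : Fin n → Formula) :
    Set (Fin n → Bool) × ((Fin n → Bool) → (Fin n → Bool) → Prop) :=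
  (tips ψs, R0 ψs)

namespace Aux13
open Formula

/-- Free Boolean evaluation treating atoms and boxed formulas as leaves. -/
def beval (v : Formula → Bool) : Formula → Bool
  | .atom p => v (.atom p)
  | .falsum => false
  | .neg A => !(beval v A)
  | .and A B => beval v A && beval v B
  | .box A => v (.box A)

lemma beval_boolVal (v : Formula → Bool) : IsBoolVal (beval v) :=
  ⟨rfl, fun _ => rfl, fun _ _ => rfl⟩

lemma beval_eq (v : Formula → Bool) (hv : IsBoolVal v) : ∀ A, beval v A = v A := by
  intro A
  induction A with
  | atom p => rfl
  | falsum => exact hv.1.symm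
  | neg A ih => simp [beval, ih, hv.2.1]
  | and A B ihA ihB => simp [beval, ihA, ihB, hv.2.2]
  | box A => rfl

lemma taut_of_beval (A : Formula) (h : ∀ v, beval v A = true) : Tautology A := by
  intro v hv
  rw [← beval_eq v hv A]; exact h v

@[simp] lemma beval_imp (v : Formula → Bool) (A B : Formula) :
    beval v (Formula.imp A B) = (!(beval v A) || beval v B) := by
  simp [Formula.imp, beval]

@[simp] lemma beval_or (v : Formula → Bool) (A B : Formula) :
    beval v (Formula.or A B) = (beval v A || beval v B) := by
  simp [Formula.or, beval]

@[simp] lemma beval_neg (v : Formula → Bool) (A : Formula) :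
    beval v (.neg A) = !(beval v A) := rfl

@[simp] lemma beval_and (v : Formula → Bool) (A B : Formula) :
    beval v (.and A B) = (beval v A && beval v B) := rfl

@[simp] lemma beval_falsum (v : Formula → Bool) : beval v .falsum = false := rfl

def conj : List Formula → Formula
  | [] => .neg .falsum
  | a :: l => .and a (conj l)

def disj : List Formula → Formula
  | [] => .falsum
  | a :: l => Formula.or a (disj l)

@[simp] lemma beval_conj (v : Formula → Bool) (l : List Formula) :
    beval v (conj l) = l.all (beval v) := by
  induction l with
  | nil => rfl
  | cons a l ih => simp [conj, ih]

@[simp] lemma beval_disj (v : Formula → Bool) (l : List Formula) :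
    beval v (disj l) = l.any (beval v) := by
  induction l with
  | nil => rfl
  | cons a l ih => simp [disj, ih]

/-! ### Basic facts about `KDe` -/

lemma KDe_logic : IsModalLogic KDe := by
  constructor
  · intro φ h L hL; exact hL.1.taut φ h
  · intro φ ψ h1 h2 L hL; exact hL.1.mp φ ψ (h1 L hL) (h2 L hL)
  · intro φ σ h L hL; exact hL.1.subst φ σ (h L hL)
  · intro L hL; exact hL.1.axK
  · intro L hL; exact hL.1.axTop
  · intro φ ψ h L hL; exact hL.1.mono φ ψ (h L hL)

lemma den_mem : Formula.imp (.box (.box (.atom 0))) (.box (.atom 0)) ∈ KDe := by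
  intro L hL; exact hL.2

lemma mp' {A B : Formula} (h : Formula.imp A B ∈ KDe) (h2 : A ∈ KDe) : B ∈ KDe :=
  KDe_logic.mp A B h h2

lemma taut_mem (A : Formula) (h : ∀ v, beval v A = true) : A ∈ KDe :=
  KDe_logic.taut A (taut_of_beval A h)

@[simp] lemma fsubst_imp (σ : ℕ → Formula) (A B : Formula) :
    fsubst σ (Formula.imp A B) = Formula.imp (fsubst σ A) (fsubst σ B) := rfl

lemma axK' (A B : Formula) :
    Formula.imp (.and (.box A) (.box B)) (.box (.and A B)) ∈ KDe := by
  have := KDe_logic.subst _ (fun k => if k = 0 then A else B) KDe_logic.axK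
  simpa [fsubst] using this

lemma den' (A : Formula) : Formula.imp (.box (.box A)) (.box A) ∈ KDe := by
  have := KDe_logic.subst _ (fun _ => A) den_mem
  simpa [fsubst] using this

lemma imp_trans {A B C : Formula} (h1 : Formula.imp A B ∈ KDe)
    (h2 : Formula.imp B C ∈ KDe) : Formula.imp A C ∈ KDe := by
  have g : Formula.imp (Formula.imp A B)
      (Formula.imp (Formula.imp B C) (Formula.imp A C)) ∈ KDe := by
    apply taut_mem; intro v
    simp only [beval_imp]
    cases beval v A <;> cases beval v B <;> cases beval v C <;> rfl
  exact mp' (mp' g h1) h2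

lemma boxConj (l : List Formula) :
    Formula.imp (conj (l.map .box)) (.box (conj l)) ∈ KDe := by
  induction l with
  | nil =>
    have g : Formula.imp (Formula.box (.neg .falsum))
        (Formula.imp (conj ([] : List Formula)) (Formula.box (conj []))) ∈ KDe := by
      apply taut_mem; intro v
      simp only [beval_imp, conj, beval_neg, beval_falsum]
      cases beval v (Formula.box (.neg .falsum)) <;> simp
    exact mp' g KDe_logic.axTop
  | cons a l ih =>
    have hK := axK' a (conj l)
    -- glue : (C → D) → ((□a ∧ D → E) → (□a ∧ C → E))
    have g : Formula.imp (Formula.imp (conj (l.map .box)) (.box (conj l)))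
        (Formula.imp (Formula.imp (.and (.box a) (.box (conj l))) (.box (.and a (conj l))))
          (Formula.imp (conj ((a :: l).map .box)) (.box (conj (a :: l))))) ∈ KDe := by
      apply taut_mem; intro v
      simp only [beval_imp, conj, List.map_cons, beval_and]
      cases beval v (conj (l.map .box)) <;> cases beval v (.box (conj l)) <;>
        cases beval v (.box a) <;> cases beval v (.box (.and a (conj l))) <;> rfl
    exact mp' (mp' g ih) hK

lemma mono' {A B : Formula} (h : Formula.imp A B ∈ KDe) :
    Formula.imp (.box A) (.box B) ∈ KDe := KDe_logic.mono A B h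

lemma boxDisj (l : List Formula) :
    Formula.imp (disj (l.map .box)) (.box (disj l)) ∈ KDe := by
  induction l with
  | nil =>
    apply taut_mem; intro v
    simp [disj]
  | cons a l ih =>
    have h1 : Formula.imp (.box a) (.box (disj (a :: l))) ∈ KDe := by
      apply mono'; apply taut_mem; intro v
      simp only [beval_imp, disj, beval_or]
      cases beval v a <;> simp
    have h2 : Formula.imp (disj (l.map .box)) (.box (disj (a :: l))) ∈ KDe := by
      refine imp_trans ih (mono' ?_)
      apply taut_mem; intro v
      simp only [beval_imp, disj, beval_or]
      cases beval v (disj l) <;> simp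
    have g : Formula.imp (Formula.imp (.box a) (.box (disj (a :: l))))
        (Formula.imp (Formula.imp (disj (l.map .box)) (.box (disj (a :: l))))
          (Formula.imp (disj ((a :: l).map .box)) (.box (disj (a :: l))))) ∈ KDe := by
      apply taut_mem; intro v
      simp only [beval_imp, disj, List.map_cons, beval_or]
      cases beval v (.box a) <;> cases beval v (disj (l.map .box)) <;>
        cases beval v (Formula.box (Formula.or a (disj l))) <;> simp
    exact mp' (mp' g h1) h2
end Aux13
namespace Aux13
open Formula

/-- Consistency of a set of formulas relative to `KDe`. -/
def Con (Γ : Set Formula) : Prop :=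
  ∀ l : List Formula, (∀ x ∈ l, x ∈ Γ) → Formula.imp (conj l) .falsum ∉ KDe

lemma theory_deduce {s : Set Formula} (hs : IsTheory KDe s) :
    ∀ (l : List Formula), (∀ x ∈ l, x ∈ s) → ∀ (Y : Formula),
      Formula.imp (conj l) Y ∈ KDe → Y ∈ s := by
  intro l
  induction l with
  | nil =>
    intro _ Y h
    have htop : Formula.neg .falsum ∈ s := hs.1 (taut_mem _ (by intro v; simp))
    exact hs.2 _ _ (hs.1 h) htop
  | cons a l ih =>
    intro hl Y h
    have g : Formula.imp (Formula.imp (conj (a :: l)) Y)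
        (Formula.imp (conj l) (Formula.imp a Y)) ∈ KDe := by
      apply taut_mem; intro v
      simp only [beval_imp, conj, beval_and, beval_conj]
      cases beval v a <;> cases l.all (beval v) <;> cases beval v Y <;> rfl
    have h2 : Formula.imp (conj l) (Formula.imp a Y) ∈ KDe := mp' g h
    have h3 : Formula.imp a Y ∈ s := ih (fun x hx => hl x (List.mem_cons_of_mem a hx)) _ h2
    exact hs.2 _ _ h3 (hl a List.mem_cons_self)

lemma prime_con {s : Set Formula} (hs : IsPrime KDe s) : Con s := by
  intro l hl h
  exact hs.2.1 (theory_deduce hs.1 l hl _ h)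

lemma prime_neg_mem {s : Set Formula} (hs : IsPrime KDe s) (A : Formula) :
    Formula.neg A ∈ s ↔ A ∉ s := by
  constructor
  · intro hn hA
    have g : Formula.imp A (Formula.imp (.neg A) .falsum) ∈ KDe := by
      apply taut_mem; intro v
      simp only [beval_imp, beval_neg, beval_falsum]
      cases beval v A <;> rfl
    exact hs.2.1 (hs.1.2 _ _ (hs.1.2 _ _ (hs.1.1 g) hA) hn)
  · intro hA
    have hlem : Formula.or A (.neg A) ∈ s := by
      apply hs.1.1; apply taut_mem; intro v
      simp only [beval_or, beval_neg]
      cases beval v A <;> rfl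
    rcases hs.2.2 _ _ hlem with h | h
    · exact absurd h hA
    · exact h

lemma prime_and_mem {s : Set Formula} (hs : IsPrime KDe s) (A B : Formula) :
    Formula.and A B ∈ s ↔ (A ∈ s ∧ B ∈ s) := by
  constructor
  · intro h
    constructor
    · refine hs.1.2 _ _ ?_ h
      apply hs.1.1; apply taut_mem; intro v
      simp only [beval_imp, beval_and]
      cases beval v A <;> cases beval v B <;> rfl
    · refine hs.1.2 _ _ ?_ h
      apply hs.1.1; apply taut_mem; intro v
      simp only [beval_imp, beval_and]
      cases beval v A <;> cases beval v B <;> rfl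
  · rintro ⟨hA, hB⟩
    have g : Formula.imp A (Formula.imp B (Formula.and A B)) ∈ KDe := by
      apply taut_mem; intro v
      simp only [beval_imp, beval_and]
      cases beval v A <;> cases beval v B <;> rfl
    exact hs.1.2 _ _ (hs.1.2 _ _ (hs.1.1 g) hA) hB

lemma prime_disj_elim {s : Set Formula} (hs : IsPrime KDe s) :
    ∀ (ds : List Formula), disj ds ∈ s → ∃ δ ∈ ds, δ ∈ s := by
  intro ds
  induction ds with
  | nil => intro h; exact absurd h hs.2.1
  | cons a ds ih =>
    intro h
    rcases hs.2.2 _ _ h with h | h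
    · exact ⟨a, List.mem_cons_self, h⟩
    · rcases ih h with ⟨δ, hδ, hδs⟩
      exact ⟨δ, List.mem_cons_of_mem a hδ, hδs⟩

/-- Filtering out occurrences of `A` from an inconsistent list. -/
lemma con_filter_step {l : List Formula} {A : Formula}
    (h : Formula.imp (conj l) .falsum ∈ KDe) :
    Formula.imp (conj (l.filter (fun x => x ≠ A))) (Formula.neg A) ∈ KDe := by
  classical
  refine mp' ?_ h
  apply taut_mem; intro v
  simp only [beval_imp, beval_conj, beval_neg, beval_falsum]
  by_cases hall : l.all (beval v) = true
  · simp [hall]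
  · have : ¬ ((l.filter (fun x => x ≠ A)).all (beval v) = true ∧ beval v A = true) := by
      rintro ⟨hf, hA⟩
      apply hall
      rw [List.all_eq_true] at hf ⊢
      intro x hx
      by_cases hxA : x = A
      · subst hxA; exact hA
      · exact hf x (List.mem_filter.2 ⟨hx, by simp [hxA]⟩)
    cases h1 : l.all (beval v) with
    | true => exact absurd h1 hall
    | false =>
      cases h2 : (l.filter (fun x => x ≠ A)).all (beval v) with
      | false => simp [h1, h2]
      | true =>
        cases h3 : beval v A with
        | false => simp [h1, h2, h3]
        | true => exact absurd ⟨h2, h3⟩ this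

lemma prime_of_complete {M : Set Formula} (hcon : Con M)
    (hcomp : ∀ A : Formula, A ∈ M ∨ Formula.neg A ∈ M) : IsPrime KDe M := by
  have hKDe : KDe ⊆ M := by
    intro A hA
    rcases hcomp A with h | h
    · exact h
    · exfalso
      have g : Formula.imp A (Formula.imp (conj [Formula.neg A]) .falsum) ∈ KDe := by
        apply taut_mem; intro v
        simp only [beval_imp, conj, beval_and, beval_neg, beval_falsum, beval_conj, List.all_nil]
        cases beval v A <;> rfl
      exact hcon [Formula.neg A] (by simpa using h) (mp' g hA)
  have hbot : Formula.falsum ∉ M := by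
    intro h
    exact hcon [Formula.falsum] (by simpa using h)
      (taut_mem _ (by intro v; simp [conj]))
  refine ⟨⟨hKDe, ?_⟩, hbot, ?_⟩
  · intro A B hAB hA
    by_contra hB
    rcases hcomp B with h | h
    · exact hB h
    · refine hcon [Formula.imp A B, A, Formula.neg B] ?_ ?_
      · intro x hx
        rcases List.mem_cons.1 hx with rfl | hx
        · exact hAB
        rcases List.mem_cons.1 hx with rfl | hx
        · exact hA
        rcases List.mem_cons.1 hx with rfl | hx
        · exact h
        · exact absurd hx List.not_mem_nil
      · apply taut_mem; intro v
        simp only [conj, beval_imp, beval_and, beval_neg, beval_falsum]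
        cases beval v A <;> cases beval v B <;> rfl
  · intro A B hor
    by_contra hc
    push_neg at hc
    obtain ⟨hA, hB⟩ := hc
    rcases hcomp A with h1 | h1
    · exact hA h1
    rcases hcomp B with h2 | h2
    · exact hB h2
    refine hcon [Formula.or A B, Formula.neg A, Formula.neg B] ?_ ?_
    · intro x hx
      rcases List.mem_cons.1 hx with rfl | hx
      · exact hor
      rcases List.mem_cons.1 hx with rfl | hx
      · exact h1
      rcases List.mem_cons.1 hx with rfl | hx
      · exact h2
      · exact absurd hx List.not_mem_nil
    · apply taut_mem; intro v
      simp only [conj, beval_imp, beval_and, beval_neg, beval_falsum, beval_or]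
      cases beval v A <;> cases beval v B <;> rfl

/-- Union of a chain of consistent sets is consistent. -/
lemma con_of_chain {c : Set (Set Formula)} (hc : IsChain (· ⊆ ·) c)
    (hne : c.Nonempty) (hcon : ∀ Δ ∈ c, Con Δ) : Con (⋃₀ c) := by
  intro l hl
  have : ∃ Δ ∈ c, ∀ x ∈ l, x ∈ Δ := by
    induction l with
    | nil => exact ⟨hne.choose, hne.choose_spec, by simp⟩
    | cons a l ih =>
      rcases ih (fun x hx => hl x (List.mem_cons_of_mem a hx)) with ⟨Δ, hΔ, hΔl⟩
      rcases hl a List.mem_cons_self with ⟨Δ', hΔ', haΔ'⟩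
      rcases hc.total hΔ hΔ' with hsub | hsub
      · exact ⟨Δ', hΔ', by
          intro x hx
          rcases List.mem_cons.1 hx with rfl | hx
          · exact haΔ'
          · exact hsub (hΔl x hx)⟩
      · exact ⟨Δ, hΔ, by
          intro x hx
          rcases List.mem_cons.1 hx with rfl | hx
          · exact hsub haΔ'
          · exact hΔl x hx⟩
  rcases this with ⟨Δ, hΔ, hΔl⟩
  exact hcon Δ hΔ l hΔl

/-- Lindenbaum: every consistent set extends to a prime `KDe`-theory. -/
lemma exists_prime_extend {Γ : Set Formula} (h : Con Γ) :
    ∃ M, Γ ⊆ M ∧ IsPrime KDe M := by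
  classical
  obtain ⟨M, hGM, hMmax⟩ :=
    zorn_subset_nonempty {Δ | Con Δ}
      (by
        intro c hc hchain hne
        exact ⟨⋃₀ c, con_of_chain hchain hne (fun Δ hΔ => hc hΔ),
          fun Δ hΔ => Set.subset_sUnion_of_mem hΔ⟩)
      Γ h
  have hMcon : Con M := hMmax.prop
  have hcomp : ∀ A : Formula, A ∈ M ∨ Formula.neg A ∈ M := by
    intro A
    by_contra hcon'
    push_neg at hcon'
    obtain ⟨hA, hnA⟩ := hcon'
    have h1 : ¬ Con (insert A M) := by
      intro hc
      exact hA (hMmax.2 hc (Set.subset_insert _ _) (Set.mem_insert A M))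
    have h2 : ¬ Con (insert (Formula.neg A) M) := by
      intro hc
      exact hnA (hMmax.2 hc (Set.subset_insert _ _) (Set.mem_insert _ M))
    simp only [Con, not_forall] at h1 h2
    obtain ⟨l1, hl1, hl1'⟩ := h1
    obtain ⟨l2, hl2, hl2'⟩ := h2
    rw [not_not] at hl1' hl2'
    set l1' := l1.filter (fun x => x ≠ A) with hl1def
    set l2' := l2.filter (fun x => x ≠ Formula.neg A) with hl2def
    have P1 : Formula.imp (conj l1') (Formula.neg A) ∈ KDe := con_filter_step hl1'
    have P2 : Formula.imp (conj l2') (Formula.neg (Formula.neg A)) ∈ KDe := con_filter_step hl2'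
    have hmem1 : ∀ x ∈ l1', x ∈ M := by
      intro x hx
      have hx1 := List.mem_of_mem_filter hx
      have hx2 := List.of_mem_filter hx
      simp only [ne_eq, decide_not, Bool.not_eq_true', decide_eq_false_iff_not] at hx2
      rcases hl1 x hx1 with rfl | h
      · exact absurd rfl hx2
      · exact h
    have hmem2 : ∀ x ∈ l2', x ∈ M := by
      intro x hx
      have hx1 := List.mem_of_mem_filter hx
      have hx2 := List.of_mem_filter hx
      simp only [ne_eq, decide_not, Bool.not_eq_true', decide_eq_false_iff_not] at hx2
      rcases hl2 x hx1 with rfl | h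
      · exact absurd rfl hx2
      · exact h
    have g : Formula.imp (Formula.imp (conj l1') (Formula.neg A))
        (Formula.imp (Formula.imp (conj l2') (Formula.neg (Formula.neg A)))
          (Formula.imp (conj (l1' ++ l2')) .falsum)) ∈ KDe := by
      apply taut_mem; intro v
      simp only [beval_imp, beval_conj, beval_neg, beval_falsum, List.all_append]
      cases l1'.all (beval v) <;> cases l2'.all (beval v) <;> cases beval v A <;> rfl
    refine hMcon (l1' ++ l2') ?_ (mp' (mp' g P1) P2)
    intro x hx
    rcases List.mem_append.1 hx with hx | hx
    · exact hmem1 x hx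
    · exact hmem2 x hx
  exact ⟨M, hGM, prime_of_complete hMcon hcomp⟩

end Aux13
namespace Aux13
open Formula

lemma box_mem_of_list {s : Set Formula} (hs : IsPrime KDe s) (l : List Formula)
    (hl : ∀ x ∈ l, x ∈ boxInv s) (Y : Formula)
    (h : Formula.imp (conj l) Y ∈ KDe) : Formula.box Y ∈ s := by
  have h1 : Formula.imp (conj (l.map .box)) (.box Y) ∈ KDe :=
    imp_trans (boxConj l) (mono' h)
  refine theory_deduce hs.1 (l.map .box) ?_ _ h1
  intro x hx
  rcases List.mem_map.1 hx with ⟨a, ha, rfl⟩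
  exact hl a ha

lemma con_succ {s : Set Formula} (hs : IsPrime KDe s) {Y : Formula}
    (h : Formula.box Y ∉ s) : Con (insert (Formula.neg Y) (boxInv s)) := by
  classical
  intro l hl habs
  set l' := l.filter (fun x => x ≠ Formula.neg Y) with hl'def
  have P1 : Formula.imp (conj l') (Formula.neg (Formula.neg Y)) ∈ KDe := con_filter_step habs
  have P2 : Formula.imp (conj l') Y ∈ KDe := by
    refine imp_trans P1 ?_
    apply taut_mem; intro v
    simp only [beval_imp, beval_neg]
    cases beval v Y <;> rfl
  have hmem : ∀ x ∈ l', x ∈ boxInv s := by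
    intro x hx
    have hx1 := List.mem_of_mem_filter hx
    have hx2 := List.of_mem_filter hx
    simp only [ne_eq, decide_not, Bool.not_eq_true', decide_eq_false_iff_not] at hx2
    rcases hl x hx1 with rfl | h'
    · exact absurd rfl hx2
    · exact h'
  exact h (box_mem_of_list hs l' hmem Y P2)

lemma exists_succ {s : Set Formula} (hs : IsPrime KDe s) {Y : Formula}
    (h : Formula.box Y ∉ s) :
    ∃ t, IsPrime KDe t ∧ boxInv s ⊆ t ∧ Y ∉ t := by
  obtain ⟨t, hsub, ht⟩ := exists_prime_extend (con_succ hs h)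
  refine ⟨t, ht, fun x hx => hsub (Set.mem_insert_of_mem _ hx), ?_⟩
  exact (prime_neg_mem ht Y).1 (hsub (Set.mem_insert _ _))

/-- Extraction of the boxed formula under a negation. -/
def extract : Formula → Option Formula
  | .neg (.box δ) => some δ
  | _ => none

lemma list_shape (t : Set Formula) :
    ∀ L : List Formula, (∀ x ∈ L, ∃ δ, δ ∉ t ∧ x = Formula.neg (Formula.box δ)) →
      L = (L.filterMap extract).map (fun δ => Formula.neg (Formula.box δ)) ∧
        ∀ δ ∈ L.filterMap extract, δ ∉ t := by
  intro L
  induction L with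
  | nil => intro _; exact ⟨rfl, by simp⟩
  | cons x L ih =>
    intro hL
    obtain ⟨δ, hδt, rfl⟩ := hL x List.mem_cons_self
    obtain ⟨hmap, hnot⟩ := ih (fun y hy => hL y (List.mem_cons_of_mem _ hy))
    have hex : extract (Formula.neg (Formula.box δ)) = some δ := rfl
    constructor
    · rw [List.filterMap_cons, hex, List.map_cons, ← hmap]
    · intro δ' hδ'
      rw [List.filterMap_cons, hex] at hδ'
      rcases List.mem_cons.1 hδ' with rfl | hδ'
      · exact hδt
      · exact hnot δ' hδ'

lemma con_mid {s t : Set Formula} (hs : IsPrime KDe s) (ht : IsPrime KDe t)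
    (hst : boxInv s ⊆ t) :
    Con (boxInv s ∪ {x | ∃ δ, δ ∉ t ∧ x = Formula.neg (Formula.box δ)}) := by
  classical
  intro l hl habs
  set l1 := l.filter (fun x => decide (x ∈ boxInv s)) with hl1def
  set l2 := l.filter (fun x => !decide (x ∈ boxInv s)) with hl2def
  have hshape : ∀ x ∈ l2, ∃ δ, δ ∉ t ∧ x = Formula.neg (Formula.box δ) := by
    intro x hx
    have hx1 := List.mem_of_mem_filter hx
    have hx2 := List.of_mem_filter hx
    simp only [Bool.not_eq_true', decide_eq_false_iff_not] at hx2
    rcases hl x hx1 with h' | h'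
    · exact absurd h' hx2
    · exact h'
  set ds := l2.filterMap extract with hdsdef
  obtain ⟨hmap, hnot⟩ := list_shape t l2 hshape
  -- the semantic glue
  have G : Formula.imp (conj l1) (disj (ds.map .box)) ∈ KDe := by
    refine mp' ?_ habs
    apply taut_mem; intro v
    simp only [beval_imp, beval_conj, beval_disj, beval_falsum, Bool.or_false]
    cases hall : l.all (beval v) with
    | true => simp
    | false =>
      cases h1 : l1.all (beval v) with
      | false => simp [h1]
      | true =>
        cases h2 : (ds.map Formula.box).any (beval v) with
        | true => simp [h2]
        | false =>
          exfalso
          rw [List.all_eq_true] at h1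
          rw [List.any_eq_false] at h2
          have : l.all (beval v) = true := by
            rw [List.all_eq_true]
            intro x hx
            by_cases hxb : x ∈ boxInv s
            · exact h1 x (List.mem_filter.2 ⟨hx, by simp [hxb]⟩)
            · have hx2 : x ∈ l2 := List.mem_filter.2 ⟨hx, by simp [hxb]⟩
              obtain ⟨δ, hδt, rfl⟩ := hshape x hx2
              have hδds : δ ∈ ds := by
                have : Formula.neg (Formula.box δ) ∈ (ds.map
                    (fun δ => Formula.neg (Formula.box δ))) := by
                  rw [← hmap]; exact hx2
                rcases List.mem_map.1 this with ⟨δ', hδ', heq⟩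
                have : δ' = δ := by
                  injection heq with h; injection h
                exact this ▸ hδ'
              have := h2 (Formula.box δ) (List.mem_map_of_mem hδds)
              simp [beval_neg, this]
          rw [this] at hall; exact absurd hall (by simp)
  have hG2 : Formula.imp (conj l1) (Formula.box (disj ds)) ∈ KDe :=
    imp_trans G (boxDisj ds)
  have hG3 : Formula.imp (Formula.box (conj l1)) (Formula.box (disj ds)) ∈ KDe :=
    imp_trans (mono' hG2) (den' (disj ds))
  have hG4 : Formula.imp (conj (l1.map .box)) (Formula.box (disj ds)) ∈ KDe :=
    imp_trans (boxConj l1) hG3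
  have hmem1 : ∀ x ∈ l1.map Formula.box, x ∈ s := by
    intro x hx
    rcases List.mem_map.1 hx with ⟨a, ha, rfl⟩
    have := List.of_mem_filter ha
    simp only [decide_eq_true_eq] at this
    exact this
  have hbox : Formula.box (disj ds) ∈ s := theory_deduce hs.1 _ hmem1 _ hG4
  have hdisj : disj ds ∈ t := hst hbox
  obtain ⟨δ, hδds, hδt⟩ := prime_disj_elim ht ds hdisj
  exact hnot δ hδds hδt

lemma exists_mid {s t : Set Formula} (hs : IsPrime KDe s) (ht : IsPrime KDe t)
    (hst : boxInv s ⊆ t) :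
    ∃ u, IsPrime KDe u ∧ boxInv s ⊆ u ∧ boxInv u ⊆ t := by
  obtain ⟨u, hsub, hu⟩ := exists_prime_extend (con_mid hs ht hst)
  refine ⟨u, hu, fun x hx => hsub (Set.mem_union_left _ hx), ?_⟩
  intro χ hχ
  by_contra hχt
  have : Formula.neg (Formula.box χ) ∈ u :=
    hsub (Set.mem_union_right _ ⟨χ, hχt, rfl⟩)
  exact (prime_neg_mem hu _).1 this hχ

end Aux13
namespace Aux13
open Formula

lemma tipOf_eq_true {n : ℕ} (ψs : Fin n → Formula) (s : Set Formula) (i : Fin n) :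
    tipOf ψs s i = true ↔ ψs i ∈ s := by
  unfold tipOf
  split <;> simp [*]

lemma tipOf_eq_false {n : ℕ} (ψs : Fin n → Formula) (s : Set Formula) (i : Fin n) :
    tipOf ψs s i = false ↔ ψs i ∉ s := by
  rw [← tipOf_eq_true]
  cases tipOf ψs s i <;> simp

lemma tipOf_mem_tips {n : ℕ} (ψs : Fin n → Formula) {s : Set Formula}
    (hs : IsPrime KDe s) : tipOf ψs s ∈ tips ψs := by
  refine ⟨?_, ?_, ?_⟩
  · intro i hi
    rw [tipOf_eq_false, hi]
    exact hs.2.1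
  · intro i j hij
    cases hj : tipOf ψs s j with
    | false =>
      have : ψs j ∉ s := (tipOf_eq_false ψs s j).1 hj
      have : ψs i ∈ s := by rw [hij]; exact (prime_neg_mem hs _).2 this
      simp [(tipOf_eq_true ψs s i).2 this]
    | true =>
      have h1 : ψs j ∈ s := (tipOf_eq_true ψs s j).1 hj
      have : ψs i ∉ s := by
        rw [hij]
        intro hc
        exact (prime_neg_mem hs _).1 hc h1
      simp [(tipOf_eq_false ψs s i).2 this]
  · intro i j k hijk
    by_cases hj : ψs j ∈ s
    · by_cases hk : ψs k ∈ s
      · have : ψs i ∈ s := by rw [hijk]; exact (prime_and_mem hs _ _).2 ⟨hj, hk⟩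
        simp [(tipOf_eq_true ψs s i).2 this, (tipOf_eq_true ψs s j).2 hj,
          (tipOf_eq_true ψs s k).2 hk]
      · have : ψs i ∉ s := by
          rw [hijk]; intro hc; exact hk ((prime_and_mem hs _ _).1 hc).2
        simp [(tipOf_eq_false ψs s i).2 this, (tipOf_eq_false ψs s k).2 hk]
    · have : ψs i ∉ s := by
        rw [hijk]; intro hc; exact hj ((prime_and_mem hs _ _).1 hc).1
      simp [(tipOf_eq_false ψs s i).2 this, (tipOf_eq_false ψs s j).2 hj]

lemma tipOf_R0 {n : ℕ} (ψs : Fin n → Formula) {s t : Set Formula}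
    (hs : IsPrime KDe s) (ht : IsPrime KDe t) (hst : boxInv s ⊆ t) :
    R0 ψs (tipOf ψs s) (tipOf ψs t) := by
  refine ⟨tipOf_mem_tips ψs hs, tipOf_mem_tips ψs ht, ?_⟩
  intro i j hij hi
  have : ψs i ∈ s := (tipOf_eq_true ψs s i).1 hi
  rw [hij] at this
  exact (tipOf_eq_true ψs t j).2 (hst this)

lemma clip0 {n : ℕ} (ψs : Fin n → Formula) : IsClip ψs (tips ψs) (R0 ψs) where
  wsub := Set.Subset.refl _
  rmem := fun _ _ h => ⟨h.1, h.2.1⟩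
  rsub := fun _ _ h => h
  tmem := fun _ hs => tipOf_mem_tips ψs hs
  tedge := fun _ _ hs ht hst => tipOf_R0 ψs hs ht hst

lemma tmem_sigma {n : ℕ} {ψs : Fin n → Formula} {W : Set (Fin n → Bool)}
    {R : (Fin n → Bool) → (Fin n → Bool) → Prop} (h : IsClip ψs W R)
    {s : Set Formula} (hs : IsPrime KDe s) : tipOf ψs s ∈ sigmaW ψs W R := by
  refine ⟨h.tmem s hs, ?_⟩
  intro i j hij hi
  have hbox : Formula.box (ψs j) ∉ s := by
    intro hc
    have : ψs i ∈ s := by rw [hij]; exact hc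
    rw [(tipOf_eq_true ψs s i).2 this] at hi
    simp at hi
  obtain ⟨t, ht, hsub, hjt⟩ := exists_succ hs hbox
  exact ⟨tipOf ψs t, h.tmem t ht, h.tedge s t hs ht hsub, (tipOf_eq_false ψs t j).2 hjt⟩

lemma clip_sigma {n : ℕ} {ψs : Fin n → Formula} {W : Set (Fin n → Bool)}
    {R : (Fin n → Bool) → (Fin n → Bool) → Prop} (h : IsClip ψs W R) :
    IsClip ψs (sigmaW ψs W R) (sigmaR ψs W R) where
  wsub := fun a ha => h.wsub ha.1
  rmem := fun _ _ hr => ⟨hr.1, hr.2.1⟩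
  rsub := fun a b hr => h.rsub a b hr.2.2.1
  tmem := fun _ hs => tmem_sigma h hs
  tedge := by
    intro s t hs ht hst
    obtain ⟨u, hu, h1, h2⟩ := exists_mid hs ht hst
    exact ⟨tmem_sigma h hs, tmem_sigma h ht, h.tedge s t hs ht hst,
      tipOf ψs u, h.tmem u hu, h.tedge s u hs hu h1, h.tedge u t hu ht h2⟩

lemma clip_iter {n : ℕ} (ψs : Fin n → Formula) :
    ∀ m : ℕ, IsClip ψs ((sigmaPair ψs)^[m] (X0 ψs)).1 ((sigmaPair ψs)^[m] (X0 ψs)).2 := by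
  intro m
  induction m with
  | zero => exact clip0 ψs
  | succ m ih =>
    rw [Function.iterate_succ_apply']
    exact clip_sigma ih

end Aux13
namespace Aux13
open Formula

/-- Kripke satisfaction. -/
def sat {α : Type} (R : α → α → Prop) (V : ℕ → α → Prop) : Formula → α → Prop
  | .atom p, w => V p w
  | .falsum, _ => False
  | .neg A, w => ¬ sat R V A w
  | .and A B, w => sat R V A w ∧ sat R V B w
  | .box A, w => ∀ u, R w u → sat R V A u

lemma sat_imp {α : Type} (R : α → α → Prop) (V : ℕ → α → Prop) (A B : Formula) (w : α) :
    sat R V (Formula.imp A B) w ↔ (sat R V A w → sat R V B w) := by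
  simp only [Formula.imp, sat]
  tauto

lemma sat_or {α : Type} (R : α → α → Prop) (V : ℕ → α → Prop) (A B : Formula) (w : α) :
    sat R V (Formula.or A B) w ↔ (sat R V A w ∨ sat R V B w) := by
  simp only [Formula.or, sat]
  tauto

lemma sat_of_taut {α : Type} {R : α → α → Prop} {V : ℕ → α → Prop} {A : Formula}
    (h : Tautology A) (w : α) : sat R V A w := by
  classical
  set v : Formula → Bool := fun B => decide (sat R V B w) with hv
  have hbv : IsBoolVal v := by
    refine ⟨?_, ?_, ?_⟩
    · simp only [hv, sat]; exact @decide_eq_false _ (_) id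
    · intro B; simp only [hv, sat]; by_cases hB : sat R V B w <;> simp [hB]
    · intro B C; simp only [hv, sat]
      by_cases hB : sat R V B w <;> by_cases hC : sat R V C w <;> simp [hB, hC]
  have := h v hbv
  simp only [hv, decide_eq_true_eq] at this
  exact this

lemma sat_fsubst {α : Type} (R : α → α → Prop) (V : ℕ → α → Prop) (σ : ℕ → Formula) :
    ∀ (A : Formula) (w : α),
      sat R V (fsubst σ A) w ↔ sat R (fun p u => sat R V (σ p) u) A w := by
  intro A
  induction A with
  | atom p => intro w; simp [fsubst, sat]
  | falsum => intro w; simp [fsubst, sat]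
  | neg A ih => intro w; simp [fsubst, sat, ih]
  | and A B ihA ihB => intro w; simp [fsubst, sat, ihA, ihB]
  | box A ih => intro w; simp [fsubst, sat, ih]

/-- Validity over a frame is a modal logic. -/
lemma frame_logic {α : Type} (R : α → α → Prop) :
    IsModalLogic {A | ∀ (V : ℕ → α → Prop) (w : α), sat R V A w} := by
  constructor
  · intro A h V w; exact sat_of_taut h w
  · intro A B h1 h2 V w
    exact (sat_imp R V A B w).1 (h1 V w) (h2 V w)
  · intro A σ h V w
    exact (sat_fsubst R V σ A w).2 (h _ w)
  · intro V w
    rw [sat_imp]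
    rintro ⟨h1, h2⟩ u hu
    exact ⟨h1 u hu, h2 u hu⟩
  · intro V w
    intro u _
    simp [sat]
  · intro A B h V w
    rw [sat_imp]
    intro hA u hu
    exact (sat_imp R V A B u).1 (h V u) (hA u hu)

lemma frame_den {α : Type} (R : α → α → Prop)
    (hdense : ∀ a b, R a b → ∃ c, R a c ∧ R c b) :
    Formula.imp (.box (.box (.atom 0))) (.box (.atom 0)) ∈
      {A | ∀ (V : ℕ → α → Prop) (w : α), sat R V A w} := by
  intro V w
  rw [sat_imp]
  intro h u hu
  obtain ⟨c, h1, h2⟩ := hdense w u hu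
  exact h c h1 u h2

lemma KDe_sub_frame {α : Type} (R : α → α → Prop)
    (hdense : ∀ a b, R a b → ∃ c, R a c ∧ R c b) :
    KDe ⊆ {A | ∀ (V : ℕ → α → Prop) (w : α), sat R V A w} :=
  fun _ hA => hA _ ⟨frame_logic R, frame_den R hdense⟩

/-- Every formula is its own subformula. -/
lemma mem_subf_self : ∀ B : Formula, B ∈ Subf B := by
  intro B
  cases B with
  | atom p => exact rfl
  | falsum => exact rfl
  | neg A => exact Set.mem_insert _ _
  | and A B => exact Set.mem_insert _ _
  | box A => exact Set.mem_insert _ _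

lemma subf_trans : ∀ φ B : Formula, B ∈ Subf φ → Subf B ⊆ Subf φ := by
  intro φ
  induction φ with
  | atom p =>
    intro B hB
    rcases hB with rfl
    exact Set.Subset.refl _
  | falsum =>
    intro B hB
    rcases hB with rfl
    exact Set.Subset.refl _
  | neg ψ ih =>
    intro B hB
    rcases Set.mem_insert_iff.1 hB with rfl | hB
    · exact Set.Subset.refl _
    · exact (ih B hB).trans (Set.subset_insert _ _)
  | and ψ χ ihψ ihχ =>
    intro B hB
    rcases Set.mem_insert_iff.1 hB with rfl | hB
    · exact Set.Subset.refl _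
    · rcases (Set.mem_union _ _ _).1 hB with hB | hB
      · exact (ihψ B hB).trans ((Set.subset_union_left).trans (Set.subset_insert _ _))
      · exact (ihχ B hB).trans ((Set.subset_union_right).trans (Set.subset_insert _ _))
  | box ψ ih =>
    intro B hB
    rcases Set.mem_insert_iff.1 hB with rfl | hB
    · exact Set.Subset.refl _
    · exact (ih B hB).trans (Set.subset_insert _ _)

lemma subf_neg {φ C : Formula} (h : Formula.neg C ∈ Subf φ) : C ∈ Subf φ :=
  subf_trans φ _ h (Set.mem_insert_of_mem _ (mem_subf_self C))

lemma subf_and {φ C D : Formula} (h : Formula.and C D ∈ Subf φ) :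
    C ∈ Subf φ ∧ D ∈ Subf φ :=
  ⟨subf_trans φ _ h (Set.mem_insert_of_mem _ (Set.mem_union_left _ (mem_subf_self C))),
   subf_trans φ _ h (Set.mem_insert_of_mem _ (Set.mem_union_right _ (mem_subf_self D)))⟩

lemma subf_box {φ C : Formula} (h : Formula.box C ∈ Subf φ) : C ∈ Subf φ :=
  subf_trans φ _ h (Set.mem_insert_of_mem _ (mem_subf_self C))

end Aux13
namespace Aux13
open Formula

lemma truth_lemma {n : ℕ} (ψs : Fin (n + 1) → Formula) (φ : Formula)
    (henum : IsEnum φ ψs) {W : Set (Fin (n + 1) → Bool)}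
    {R : (Fin (n + 1) → Bool) → (Fin (n + 1) → Bool) → Prop}
    (hclip : IsClip ψs W R)
    (hWfix : sigmaW ψs W R = W) (hRfix : sigmaR ψs W R = R) :
    ∀ (m : ℕ) (i : Fin (n + 1)), i.val < m → ∀ a : {x // x ∈ W},
      sat (fun a b : {x // x ∈ W} => R a.1 b.1)
        (fun p a => ∃ i', ψs i' = .atom p ∧ a.1 i' = true) (ψs i) a ↔ a.1 i = true := by
  intro m
  induction m with
  | zero => intro i him; omega
  | succ m ih =>
    intro i him a
    have hrange : ψs i ∈ Subf φ := henum.2.1 ▸ Set.mem_range_self i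
    have htip : a.1 ∈ tips ψs := hclip.wsub a.2
    cases hψ : ψs i with
    | atom p =>
      simp only [sat]
      constructor
      · rintro ⟨i', h1, h2⟩
        have : i' = i := henum.1 (h1.trans hψ.symm)
        exact this ▸ h2
      · intro hh
        exact ⟨i, hψ, hh⟩
    | falsum =>
      simp only [sat, false_iff]
      rw [htip.1 i hψ]
      simp
    | neg A =>
      have hA : A ∈ Subf φ := subf_neg (hψ ▸ hrange)
      rw [← henum.2.1] at hA
      obtain ⟨j, hj⟩ := hA
      have hji : j < i := henum.2.2.1 i j (by rw [hψ, hj])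
      have hjm : j.val < m := by
        have := him
        have := hji
        omega
      have ihj := ih j hjm a
      have htipn : a.1 i = !(a.1 j) := htip.2.1 i j (by rw [hψ, hj])
      simp only [sat]
      rw [← hj, ihj, htipn]
      cases a.1 j <;> simp
    | and A B =>
      have hAB := subf_and (hψ ▸ hrange)
      obtain ⟨hA, hB⟩ := hAB
      rw [← henum.2.1] at hA hB
      obtain ⟨j, hj⟩ := hA
      obtain ⟨l, hl⟩ := hB
      have hji := (henum.2.2.2.1 i j l (by rw [hψ, hj, hl])).1
      have hli := (henum.2.2.2.1 i j l (by rw [hψ, hj, hl])).2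
      have ihj := ih j (by have := hji; omega) a
      have ihl := ih l (by have := hli; omega) a
      have htipn : a.1 i = (a.1 j && a.1 l) := htip.2.2 i j l (by rw [hψ, hj, hl])
      simp only [sat]
      rw [← hj, ← hl, ihj, ihl, htipn]
      cases a.1 j <;> cases a.1 l <;> simp
    | box A =>
      have hA : A ∈ Subf φ := subf_box (hψ ▸ hrange)
      rw [← henum.2.1] at hA
      obtain ⟨j, hj⟩ := hA
      have hji : j < i := henum.2.2.2.2 i j (by rw [hψ, hj])
      have hjm : j.val < m := by have := hji; omega
      simp only [sat]
      constructor
      · intro hh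
        by_contra hfalse
        have hfalse' : a.1 i = false := by
          cases hai : a.1 i
          · rfl
          · exact absurd hai hfalse
        have haW : a.1 ∈ sigmaW ψs W R := by rw [hWfix]; exact a.2
        obtain ⟨b, hbW, hRab, hbj⟩ := haW.2 i j (by rw [hψ, hj]) hfalse'
        have hbj' : b j = true := (ih j hjm ⟨b, hbW⟩).1 (by rw [hj]; exact hh ⟨b, hbW⟩ hRab)
        rw [hbj'] at hbj
        exact absurd hbj (by simp)
      · intro hi b hRb
        have hb0 : b.1 j = true :=
          (hclip.rsub _ _ hRb).2.2 i j (by rw [hψ, hj]) hi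
        have := (ih j hjm b).2 hb0
        rw [hj] at this
        exact this

end Aux13

/-- With `ψ_n = φ` the last element of the enumeration and
`(W^{k_φ},R^{k_φ}) = σ_φ^{k_φ}(W⁰,R⁰)` the fixpoint of `σ_φ`, one has `φ ∈ KDe` iff
every tip of `W^{k_φ}` gives the value `1` to `φ`. -/
theorem stmt13 (φ : Formula) {n : ℕ} (ψs : Fin (n + 1) → Formula)
    (henum : IsEnum φ ψs) (hlast : ψs (Fin.last n) = φ)
    (k : ℕ)
    (hfix : (sigmaPair ψs)^[k + 1] (X0 ψs) = (sigmaPair ψs)^[k] (X0 ψs))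
    (hleast : ∀ j : ℕ, (sigmaPair ψs)^[j + 1] (X0 ψs) = (sigmaPair ψs)^[j] (X0 ψs) →
      k ≤ j) :
    φ ∈ KDe ↔
      ∀ a : Fin (n + 1) → Bool, a ∈ ((sigmaPair ψs)^[k] (X0 ψs)).1 →
        a (Fin.last n) = true := by
  classical
  set W : Set (Fin (n + 1) → Bool) := ((sigmaPair ψs)^[k] (X0 ψs)).1 with hWdef
  set R : (Fin (n + 1) → Bool) → (Fin (n + 1) → Bool) → Prop :=
    ((sigmaPair ψs)^[k] (X0 ψs)).2 with hRdef
  have hclip : IsClip ψs W R := Aux13.clip_iter ψs k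
  rw [Function.iterate_succ_apply'] at hfix
  have hWfix : sigmaW ψs W R = W := congrArg Prod.fst hfix
  have hRfix : sigmaR ψs W R = R := congrArg Prod.snd hfix
  constructor
  · -- soundness
    intro h a ha
    set Rel : {x // x ∈ W} → {x // x ∈ W} → Prop := fun a b => R a.1 b.1 with hRel
    have hdense : ∀ x y, Rel x y → ∃ z, Rel x z ∧ Rel z y := by
      intro x y hxy
      have : sigmaR ψs W R x.1 y.1 := by rw [hRfix]; exact hxy
      obtain ⟨_, _, _, c, hcW, h1, h2⟩ := this
      exact ⟨⟨c, hcW⟩, h1, h2⟩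
    have hsat := Aux13.KDe_sub_frame Rel hdense h
      (fun p x => ∃ i', ψs i' = .atom p ∧ x.1 i' = true) ⟨a, ha⟩
    have htruth := Aux13.truth_lemma ψs φ henum hclip hWfix hRfix (n + 1)
      (Fin.last n) (by simp [Fin.last]) ⟨a, ha⟩
    rw [hlast] at htruth
    exact htruth.1 hsat
  · -- completeness
    intro h
    by_contra hφ
    have hcon : Aux13.Con {Formula.neg φ} := by
      intro l hl habs
      apply hφ
      refine Aux13.mp' ?_ habs
      apply Aux13.taut_mem; intro v
      simp only [Aux13.beval_imp, Aux13.beval_conj, Aux13.beval_falsum, Bool.or_false]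
      cases hv : Aux13.beval v φ with
      | true => simp [hv]
      | false =>
        have hall : l.all (Aux13.beval v) = true := by
          rw [List.all_eq_true]
          intro x hx
          have := Set.mem_singleton_iff.1 (hl x hx)
          subst this
          simp [hv]
        simp [hall]
    obtain ⟨M, hsub, hM⟩ := Aux13.exists_prime_extend hcon
    have htip : tipOf ψs M ∈ W := hclip.tmem M hM
    have := h (tipOf ψs M) htip
    have hmem : φ ∈ M := by
      rw [← hlast]
      exact (Aux13.tipOf_eq_true ψs M (Fin.last n)).1 this
    exact (Aux13.prime_neg_mem hM φ).1 (hsub rfl) hmem
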